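/- Consider a finite list whose positions are each colored red, blue, or black, and any valid sequence of adjacent transpositions (one after which every red element occurs below every blue element). Then every black element j participates in at least min{B(j), R(j)} of the transpositions, where B(j) is the number of blue elements below j in the original list and R(j) is the number of red elements above j in the original list. -/

import Mathlib

/-- The three colors. -/
inductive Col : Type
  | red
  | blue
  | black
deriving DecidableEq

/-- `l'` is obtained from `l` by one adjacent transposition (swap). -/
def AdjSwap {γ : Type*} (l l' : List γ) : Prop :=
  ∃ (p s : List γ) (x y : γ), l = p ++ x :: y :: s ∧ l' = p ++ y :: x :: s

/-- `SwapSeqL k l l'` : `l'` is obtained from `l` by a sequence of `k`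
adjacent transpositions. -/
def SwapSeqL {γ : Type*} : ℕ → List γ → List γ → Prop
  | 0, l, l' => l' = l
  | k + 1, l, l' => ∃ l'', AdjSwap l l'' ∧ SwapSeqL k l'' l'

/-- We represent the original list `(a₁, …, a_d)` by `List.finRange d`
(element `x : Fin d` starts at position `x`), with colors `color : Fin d → Col`.
`Bcnt color x` is the number of blue elements below (after) `x` in the
original list. -/
def Bcnt {d : ℕ} (color : Fin d → Col) (x : Fin d) : ℕ :=
  (Finset.univ.filter (fun y => color y = Col.blue ∧ x < y)).card

/-- `Rcnt color x` is the number of red elements above (before) `x` in the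
original list. -/
def Rcnt {d : ℕ} (color : Fin d → Col) (x : Fin d) : ℕ :=
  (Finset.univ.filter (fun y => color y = Col.red ∧ y < x)).card

/-- Apply the adjacent transposition exchanging the entries at positions
`p` and `p + 1` of the list `l`. -/
def applySwap {γ : Type*} (p : ℕ) (l : List γ) : List γ :=
  l.take p ++ (match l.drop p with
    | x :: y :: s => y :: x :: s
    | s => s)

/-- Apply a sequence of adjacent transpositions, given by the list of the
positions at which they act, from left to right. -/
def applySwaps {γ : Type*} (sws : List ℕ) (l : List γ) : List γ :=
  sws.foldl (fun l p => applySwap p l) l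

/-- The number of transpositions of the sequence `sws` (applied to `l`)
in which the element `j` participates, i.e. in which `j` is one of the two
exchanged elements. -/
def participations {γ : Type*} [DecidableEq γ] (j : γ) : List ℕ → List γ → ℕ
  | [], _ => 0
  | p :: ps, l => (if j ∈ (l.drop p).take 2 then 1 else 0) + participations j ps (applySwap p l)


open List Finset

lemma indexOf_swap_facts {d : ℕ} (t s : List (Fin d)) (a b : Fin d)
    (hn : (t ++ a :: b :: s).Nodup) :
    (t ++ a :: b :: s).idxOf a = t.length ∧
    (t ++ a :: b :: s).idxOf b = t.length + 1 ∧
    (t ++ b :: a :: s).idxOf b = t.length ∧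
    (t ++ b :: a :: s).idxOf a = t.length + 1 ∧
    ∀ z : Fin d, z ≠ a → z ≠ b →
      (t ++ b :: a :: s).idxOf z = (t ++ a :: b :: s).idxOf z := by
  rw [List.nodup_append] at hn
  obtain ⟨hnt, hnc, hdisj⟩ := hn
  have hat : a ∉ t := fun h => hdisj _ h _ (by simp) rfl
  have hbt : b ∉ t := fun h => hdisj _ h _ (by simp) rfl
  have hab : a ≠ b := by
    have := (List.nodup_cons.mp hnc).1
    intro h; exact this (by simp [h])
  refine ⟨?_, ?_, ?_, ?_, ?_⟩
  · rw [List.idxOf_append_of_notMem hat, List.idxOf_cons_self]; omega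
  · rw [List.idxOf_append_of_notMem hbt, List.idxOf_cons_ne _ hab,
      List.idxOf_cons_self]
  · rw [List.idxOf_append_of_notMem hbt, List.idxOf_cons_self]; omega
  · rw [List.idxOf_append_of_notMem hat, List.idxOf_cons_ne _ hab.symm,
      List.idxOf_cons_self]
  · intro z hza hzb
    by_cases hzt : z ∈ t
    · rw [List.idxOf_append_of_mem hzt, List.idxOf_append_of_mem hzt]
    · rw [List.idxOf_append_of_notMem hzt, List.idxOf_append_of_notMem hzt,
        List.idxOf_cons_ne _ (Ne.symm hza), List.idxOf_cons_ne _ (Ne.symm hzb),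
        List.idxOf_cons_ne _ (Ne.symm hzb), List.idxOf_cons_ne _ (Ne.symm hza)]

lemma swap_cmp {d : ℕ} (t s : List (Fin d)) (a b : Fin d)
    (hn : (t ++ a :: b :: s).Nodup)
    (hmem : ∀ z : Fin d, z ∈ t ++ a :: b :: s)
    (j x : Fin d) (hc1 : ¬(x = a ∧ j = b)) (hc2 : ¬(x = b ∧ j = a)) :
    ((t ++ b :: a :: s).idxOf x < (t ++ b :: a :: s).idxOf j ↔
      (t ++ a :: b :: s).idxOf x < (t ++ a :: b :: s).idxOf j) := by
  obtain ⟨h1, h2, h3, h4, h5⟩ := indexOf_swap_facts t s a b hn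
  have hab : a ≠ b := by intro h; rw [h] at h1 h2; omega
  have huniq : ∀ z : Fin d, z ≠ a → z ≠ b →
      (t ++ a :: b :: s).idxOf z ≠ t.length ∧
      (t ++ a :: b :: s).idxOf z ≠ t.length + 1 := by
    intro z hza hzb
    constructor
    · intro h; exact hza ((List.idxOf_inj (hmem z)).mp (h.trans h1.symm))
    · intro h; exact hzb ((List.idxOf_inj (hmem z)).mp (h.trans h2.symm))
  by_cases hxa : x = a
  · by_cases hja : j = a
    · rw [hxa, hja, h4, h1]; omega
    · have hjb : j ≠ b := fun h => hc1 ⟨hxa, h⟩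
      have hu := huniq j hja hjb
      rw [hxa, h4, h1, h5 j hja hjb]
      omega
  · by_cases hxb : x = b
    · by_cases hjb : j = b
      · rw [hxb, hjb, h3, h2]; omega
      · have hja : j ≠ a := fun h => hc2 ⟨hxb, h⟩
        have hu := huniq j hja hjb
        rw [hxb, h3, h2, h5 j hja hjb]
        omega
    · have hxu := huniq x hxa hxb
      rw [h5 x hxa hxb]
      by_cases hja : j = a
      · rw [hja, h4, h1]; omega
      · by_cases hjb : j = b
        · rw [hjb, h3, h2]; omega
        · rw [h5 j hja hjb]

def flipsAux {d : ℕ} (j : Fin d) (l l' : List (Fin d)) : Finset (Fin d) :=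
  Finset.univ.filter (fun x => ¬(l.idxOf x < l.idxOf j ↔ l'.idxOf x < l'.idxOf j))

lemma flips_le_participations {d : ℕ} (j : Fin d) :
    ∀ (sws : List ℕ) (l : List (Fin d)), l.Perm (List.finRange d) →
      (∀ p ∈ sws, p + 1 < d) →
      (flipsAux j l (applySwaps sws l)).card ≤ participations j sws l := by
  intro sws
  induction sws with
  | nil =>
    intro l _ _
    simp [applySwaps, flipsAux, participations]
  | cons p ps ih =>
    intro l hl hr
    have hlen : l.length = d := by rw [hl.length_eq, List.length_finRange]
    have hp : p < l.length := by have := hr p (by simp); omega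
    have hp1 : p + 1 < l.length := by have := hr p (by simp); omega
    set a := l[p] with ha
    set b := l[p+1] with hb
    have hdrop : l.drop p = a :: b :: l.drop (p+2) := by
      rw [List.drop_eq_getElem_cons hp, List.drop_eq_getElem_cons hp1]
    have hle : l = l.take p ++ a :: b :: l.drop (p+2) := by
      conv_lhs => rw [← List.take_append_drop p l]
      rw [hdrop]
    have hswap : applySwap p l = l.take p ++ b :: a :: l.drop (p+2) := by
      unfold applySwap
      rw [hdrop]
    have hnodup : l.Nodup := hl.nodup_iff.mpr (List.nodup_finRange d)
    have hnd : (l.take p ++ a :: b :: l.drop (p+2)).Nodup := by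
      rw [← hle]; exact hnodup
    have hmem : ∀ z : Fin d, z ∈ l.take p ++ a :: b :: l.drop (p+2) := by
      intro z; rw [← hle]; exact hl.mem_iff.mpr (List.mem_finRange z)
    have hab : a ≠ b := by
      obtain ⟨h1, h2, -⟩ := indexOf_swap_facts _ _ _ _ hnd
      intro h; rw [h] at h1 h2; omega
    have hl2perm : (applySwap p l).Perm (List.finRange d) := by
      rw [hswap]
      exact ((List.Perm.swap a b _).append_left (l.take p)).trans
        (by rw [← hle]; exact hl)
    have hps : ∀ q ∈ ps, q + 1 < d := fun q hq => hr q (by simp [hq])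
    have ihp := ih (applySwap p l) hl2perm hps
    have hcmp : ∀ x : Fin d, ¬(x = a ∧ j = b) → ¬(x = b ∧ j = a) →
        ((applySwap p l).idxOf x < (applySwap p l).idxOf j ↔
          l.idxOf x < l.idxOf j) := by
      intro x hc1 hc2
      rw [hswap]
      conv_rhs => rw [hle]
      exact swap_cmp _ _ _ _ hnd hmem j x hc1 hc2
    have happ : applySwaps (p :: ps) l = applySwaps ps (applySwap p l) := by
      simp [applySwaps]
    have hjmem : (j ∈ (l.drop p).take 2) ↔ (j = a ∨ j = b) := by
      rw [hdrop]; simp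
    rw [happ]
    show (flipsAux j l (applySwaps ps (applySwap p l))).card ≤
      (if j ∈ (l.drop p).take 2 then 1 else 0) + participations j ps (applySwap p l)
    by_cases hj : j = a ∨ j = b
    · rw [if_pos (hjmem.mpr hj)]
      set y : Fin d := if j = a then b else a with hy
      have hsub : flipsAux j l (applySwaps ps (applySwap p l)) ⊆
          insert y (flipsAux j (applySwap p l) (applySwaps ps (applySwap p l))) := by
        intro x hx
        by_cases hxy : x = y
        · exact Finset.mem_insert.mpr (Or.inl hxy)
        · refine Finset.mem_insert.mpr (Or.inr ?_)
          simp only [flipsAux, Finset.mem_filter, Finset.mem_univ, true_and] at hx ⊢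
          have hc1 : ¬(x = a ∧ j = b) := by
            rintro ⟨rfl, rfl⟩
            rcases hj with h | h
            · exact hab h.symm
            · exact hxy (by simp [hy, hab.symm])
          have hc2 : ¬(x = b ∧ j = a) := by
            rintro ⟨rfl, rfl⟩
            exact hxy (by simp [hy])
          rw [← hcmp x hc1 hc2] at hx
          exact hx
      calc (flipsAux j l (applySwaps ps (applySwap p l))).card
          ≤ (insert y (flipsAux j (applySwap p l) (applySwaps ps (applySwap p l)))).card :=
            Finset.card_le_card hsub
        _ ≤ (flipsAux j (applySwap p l) (applySwaps ps (applySwap p l))).card + 1 :=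
            Finset.card_insert_le _ _
        _ ≤ 1 + participations j ps (applySwap p l) := by omega
    · rw [if_neg (fun h => hj (hjmem.mp h))]
      have heqset : flipsAux j l (applySwaps ps (applySwap p l)) =
          flipsAux j (applySwap p l) (applySwaps ps (applySwap p l)) := by
        ext x
        simp only [flipsAux, Finset.mem_filter, Finset.mem_univ, true_and]
        rw [hcmp x (fun h => hj (Or.inr h.2)) (fun h => hj (Or.inl h.2))]
      rw [heqset]
      simpa using ihp

/-- In any valid sequence of adjacent transpositions (one after
which every red element occurs below every blue element), every black element
`j` participates in at least `min (B j) (R j)` of the transpositions. -/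
theorem black_participations_lower_bound (d : ℕ) (color : Fin d → Col) (sws : List ℕ)
    (hrange : ∀ p ∈ sws, p + 1 < d)
    (hvalid : ∀ r b : Fin d, color r = Col.red → color b = Col.blue →
      (applySwaps sws (List.finRange d)).idxOf b <
        (applySwaps sws (List.finRange d)).idxOf r) :
    ∀ j : Fin d, color j = Col.black →
      min (Bcnt color j) (Rcnt color j) ≤ participations j sws (List.finRange d) := by
  intro j hj
  have hmain := flips_le_participations j sws (List.finRange d) (List.Perm.refl _) hrange
  set L := applySwaps sws (List.finRange d) with hL
  by_cases hb : ∀ b : Fin d, color b = Col.blue → j < b →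
      b ∈ flipsAux j (List.finRange d) L
  · refine le_trans (min_le_left _ _) (le_trans ?_ hmain)
    rw [Bcnt]
    apply Finset.card_le_card
    intro x hx
    simp only [Finset.mem_filter, Finset.mem_univ, true_and] at hx
    exact hb x hx.1 hx.2
  · push_neg at hb
    obtain ⟨b, hbc, hjb, hbF⟩ := hb
    refine le_trans (min_le_right _ _) (le_trans ?_ hmain)
    rw [Rcnt]
    apply Finset.card_le_card
    intro r hr'
    simp only [Finset.mem_filter, Finset.mem_univ, true_and] at hr'
    obtain ⟨hrc, hrj⟩ := hr'
    simp only [flipsAux, Finset.mem_filter, Finset.mem_univ, true_and, not_not,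
      List.idxOf_finRange] at hbF
    simp only [flipsAux, Finset.mem_filter, Finset.mem_univ, true_and,
      List.idxOf_finRange]
    have h3 := hvalid r b hrc hbc
    have hjb' : (j : ℕ) < (b : ℕ) := hjb
    have hrj' : (r : ℕ) < (j : ℕ) := hrj
    omega
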